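/- (Conjugation property of 𝔅_r.) Let r ∈ (0,1) and let (c_k)_{k≥1} be real numbers with Σ_{k≥1} |c_k| < ∞. Define F(u) = Σ_{k=1}^∞ c_k (u^k + r^{2k} u^{−k}) for r ≤ |u| ≤ 1. Then F is continuous on the closed annulus {r ≤ |u| ≤ 1}, holomorphic in its interior, its imaginary part vanishes identically on the inner circle {|u| = r}, and for every t ∈ (−π,π) one has Re F(e^{it}) + 𝔅_r(Im F(e^{i·}))(t) = 0; explicitly, Re F(e^{it}) = Σ_{k≥1} c_k (1+r^{2k}) cos(kt), Im F(e^{it}) = Σ_{k≥1} c_k (1−r^{2k}) sin(kt), and 𝔅_r applied to the latter gives −Σ_{k≥1} c_k (1+r^{2k}) cos(kt). -/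

import Mathlib

open MeasureTheory Real Set Filter Topology

noncomputable section

/-- Lebesgue measure restricted to the interval `(-π, π)`. -/
def muPi : Measure ℝ := volume.restrict (Set.Ioo (-Real.pi) Real.pi)

/-- The (unnormalised) `n`-th cosine Fourier coefficient of `f` over `(-π, π)`. -/
def cosCoef (f : ℝ → ℝ) (n : ℕ) : ℝ := ∫ t in (-Real.pi)..Real.pi, f t * Real.cos (n * t)

/-- The (unnormalised) `n`-th sine Fourier coefficient of `f` over `(-π, π)`. -/
def sinCoef (f : ℝ → ℝ) (n : ℕ) : ℝ := ∫ t in (-Real.pi)..Real.pi, f t * Real.sin (n * t)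

/-- The `n`-th Fourier multiplier `(1 + r^(2n))/(1 - r^(2n))` of the operator `𝔅_r`. -/
def brMult (r : ℝ) (n : ℕ) : ℝ := (1 + r ^ (2 * n)) / (1 - r ^ (2 * n))

/-- `IsBr r f g` says that `g` represents (as an element of `L²(-π,π)`) the image `𝔅_r f`
of `f` under the operator `𝔅_r`, defined by `𝔅_r (cos n t) = ((1+r^(2n))/(1-r^(2n))) sin n t`
for `n ≥ 1`, `𝔅_r (const) = 0` and `𝔅_r (sin n t) = -((1+r^(2n))/(1-r^(2n))) cos n t` for
`n ≥ 1`; an element of `L²(-π,π)` is uniquely determined (a.e.) by its Fourier coefficients. -/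
def IsBr (r : ℝ) (f g : ℝ → ℝ) : Prop :=
  MeasureTheory.MemLp g 2 muPi ∧ cosCoef g 0 = 0 ∧
  (∀ n : ℕ, 1 ≤ n → cosCoef g n = -(brMult r n) * sinCoef f n) ∧
  (∀ n : ℕ, 1 ≤ n → sinCoef g n = brMult r n * cosCoef f n)

/-- `InH0 v v'` says that the pair `(v, v')` is an element of the space `Ĥ₀`: `v` is an even,
`2π`-periodic, absolutely continuous real function whose weak derivative `v'` (also regarded
as `2π`-periodic) belongs to `L²(-π,π)`. -/
def InH0 (v v' : ℝ → ℝ) : Prop :=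
  (∀ t, v (-t) = v t) ∧ Function.Periodic v (2 * Real.pi) ∧
  Function.Periodic v' (2 * Real.pi) ∧
  MeasureTheory.MemLp v' 2 muPi ∧
  (∀ a b : ℝ, IntervalIntegrable v' MeasureTheory.volume a b) ∧
  (∀ a b : ℝ, v b - v a = ∫ t in a..b, v' t)

/-- The characteristic values `μ_n(r) = (1 - r^(2n))/(n (1 + r^(2n)))`. -/
def muN (r : ℝ) (n : ℕ) : ℝ := (1 - r ^ (2 * n)) / (n * (1 + r ^ (2 * n)))

/-- The `Ĥ₀`-norm of a pair `(v, v')`. -/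
def H0norm (v v' : ℝ → ℝ) : ℝ := Real.sqrt (∫ t in (-Real.pi)..Real.pi, (v t) ^ 2 + (v' t) ^ 2)

/-! ### Auxiliary lemmas -/

lemma neg_pi_lt_pi' : (-Real.pi) < Real.pi := by linarith [Real.pi_pos]

lemma my_odd_integral {f : ℝ → ℝ} (hf : Continuous f) (hodd : ∀ x, f (-x) = -f x) :
    ∫ t in (-Real.pi)..Real.pi, f t = 0 := by
  have h1 : ∫ x in (0:ℝ)..Real.pi, f (-x) = ∫ x in (-Real.pi)..(0:ℝ), f x := by
    simpa using intervalIntegral.integral_comp_neg (a := 0) (b := Real.pi) (f := f)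
  have h2 : ∫ x in (0:ℝ)..Real.pi, f (-x) = -∫ x in (0:ℝ)..Real.pi, f x := by
    simp_rw [hodd]
    exact intervalIntegral.integral_neg
  have h3 := intervalIntegral.integral_add_adjacent_intervals
    (hf.intervalIntegrable (μ := volume) (-Real.pi) 0)
    (hf.intervalIntegrable (μ := volume) 0 Real.pi)
  rw [← h3, ← h1, h2]; ring

lemma my_integral_cos_int (m : ℤ) (hm : m ≠ 0) :
    ∫ t in (-Real.pi)..Real.pi, Real.cos (m * t) = 0 := by
  have hm' : (m : ℝ) ≠ 0 := Int.cast_ne_zero.mpr hm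
  rw [intervalIntegral.integral_comp_mul_left (fun x => Real.cos x) hm']
  rw [integral_cos]
  have h1 : Real.sin ((m:ℝ) * Real.pi) = 0 := Real.sin_int_mul_pi m
  have h2 : Real.sin ((m:ℝ) * (-Real.pi)) = 0 := by
    rw [mul_neg, Real.sin_neg, h1, neg_zero]
  simp [h1, h2]

lemma my_integral_cos_cast (p q : ℕ) :
    ∫ t in (-Real.pi)..Real.pi, Real.cos (((p:ℝ) - q) * t) =
      if p = q then 2 * Real.pi else 0 := by
  by_cases h : p = q
  · simp [h, intervalIntegral.integral_const]
    ring
  · have : ((p:ℝ) - q) = ((p - q : ℤ) : ℝ) := by push_cast; ring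
    rw [this, my_integral_cos_int _ (by
      simpa [sub_eq_zero] using fun hh => h (by exact_mod_cast hh)), if_neg h]

lemma my_sin_mul_sin (p q : ℕ) (hp : p ≠ 0) (hq : q ≠ 0) :
    ∫ t in (-Real.pi)..Real.pi, Real.sin (p * t) * Real.sin (q * t) =
      if p = q then Real.pi else 0 := by
  have key : ∀ t : ℝ, Real.sin (p * t) * Real.sin (q * t) =
      (Real.cos (((p:ℝ) - q) * t) - Real.cos (((p:ℝ) + q) * t)) / 2 := by
    intro t
    rw [sub_mul, add_mul, Real.cos_sub, Real.cos_add]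
    ring
  rw [intervalIntegral.integral_congr (fun t _ => key t)]
  have hc1 : IntervalIntegrable (fun t => Real.cos (((p:ℝ) - q) * t)) volume
      (-Real.pi) Real.pi := (Real.continuous_cos.comp (by continuity)).intervalIntegrable _ _
  have hc2 : IntervalIntegrable (fun t => Real.cos (((p:ℝ) + q) * t)) volume
      (-Real.pi) Real.pi := (Real.continuous_cos.comp (by continuity)).intervalIntegrable _ _
  rw [intervalIntegral.integral_div, intervalIntegral.integral_sub hc1 hc2]
  rw [my_integral_cos_cast p q]
  have : ((p:ℝ) + q) = (((p:ℕ) + q : ℤ) : ℝ) := by push_cast; ring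
  rw [this, my_integral_cos_int _ (by omega)]
  by_cases h : p = q <;> simp [h] <;> ring

lemma my_cos_mul_cos (p q : ℕ) (hq : p ≠ 0 ∨ q ≠ 0) :
    ∫ t in (-Real.pi)..Real.pi, Real.cos (p * t) * Real.cos (q * t) =
      if p = q then Real.pi else 0 := by
  have key : ∀ t : ℝ, Real.cos (p * t) * Real.cos (q * t) =
      (Real.cos (((p:ℝ) - q) * t) + Real.cos (((p:ℝ) + q) * t)) / 2 := by
    intro t
    rw [sub_mul, add_mul, Real.cos_sub, Real.cos_add]
    ring
  rw [intervalIntegral.integral_congr (fun t _ => key t)]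
  have hc1 : IntervalIntegrable (fun t => Real.cos (((p:ℝ) - q) * t)) volume
      (-Real.pi) Real.pi := (Real.continuous_cos.comp (by continuity)).intervalIntegrable _ _
  have hc2 : IntervalIntegrable (fun t => Real.cos (((p:ℝ) + q) * t)) volume
      (-Real.pi) Real.pi := (Real.continuous_cos.comp (by continuity)).intervalIntegrable _ _
  rw [intervalIntegral.integral_div, intervalIntegral.integral_add hc1 hc2]
  rw [my_integral_cos_cast p q]
  have : ((p:ℝ) + q) = (((p:ℕ) + q : ℤ) : ℝ) := by push_cast; ring
  rw [this, my_integral_cos_int _ (by omega)]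
  by_cases h : p = q <;> simp [h]

lemma my_interchange (d : ℕ → ℝ) (hd : Summable fun k => |d k|)
    (w : ℕ → ℝ → ℝ) (hwc : ∀ k, Continuous (w k)) (hwb : ∀ k t, |w k t| ≤ 1)
    (v : ℝ → ℝ) (hvc : Continuous v) (hvb : ∀ t, |v t| ≤ 1) :
    ∫ t in (-Real.pi)..Real.pi, (∑' k, d k * w k t) * v t =
      ∑' k, d k * ∫ t in (-Real.pi)..Real.pi, w k t * v t := by
  have hle : (-Real.pi) ≤ Real.pi := neg_pi_lt_pi'.le
  have hbd : ∀ k t, ‖d k * w k t * v t‖ ≤ |d k| := by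
    intro k t
    rw [Real.norm_eq_abs, abs_mul, abs_mul]
    calc |d k| * |w k t| * |v t| ≤ |d k| * 1 * 1 := by
          gcongr <;> [exact hwb k t; exact hvb t]
      _ = |d k| := by ring
  have hint : ∀ k, IntegrableOn (fun t => d k * w k t * v t)
      (Set.Ioc (-Real.pi) Real.pi) volume := by
    intro k
    exact (Continuous.integrableOn_Ioc (by fun_prop))
  rw [intervalIntegral.integral_of_le hle]
  have hpt : ∀ t : ℝ, (∑' k, d k * w k t) * v t = ∑' k, d k * w k t * v t := by
    intro t
    exact (tsum_mul_right).symm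
  simp_rw [hpt]
  rw [← MeasureTheory.integral_tsum_of_summable_integral_norm hint ?hsum]
  case hsum =>
    apply Summable.of_nonneg_of_le (fun k => integral_nonneg (fun t => norm_nonneg _))
      (fun k => ?_) (hd.mul_right (2 * Real.pi))
    calc ∫ t in Set.Ioc (-Real.pi) Real.pi, ‖d k * w k t * v t‖ ∂volume
        ≤ ∫ _t in Set.Ioc (-Real.pi) Real.pi, |d k| ∂volume := by
          apply integral_mono (hint k).norm (integrableOn_const ?_) (fun t => hbd k t)
          rw [Real.volume_Ioc]
          exact ENNReal.ofReal_ne_top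
      _ = |d k| * (2 * Real.pi) := by
          rw [setIntegral_const, Real.volume_real_Ioc_of_le hle, smul_eq_mul]
          ring
  congr 1
  ext k
  rw [← intervalIntegral.integral_of_le hle, ← intervalIntegral.integral_const_mul]
  congr 1
  ext t
  ring

/-! ### The series terms -/

def myTerm (r : ℝ) (c : ℕ → ℝ) (k : ℕ) (u : ℂ) : ℂ :=
  (c (k + 1) : ℂ) * (u ^ (k + 1) + (r : ℂ) ^ (2 * (k + 1)) * u ^ (-(k + 1 : ℤ)))

lemma myTerm_bound {r : ℝ} (hr0 : 0 < r) (hr1 : r < 1) (c : ℕ → ℝ) (k : ℕ) {u : ℂ}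
    (h1 : r ≤ ‖u‖) (h2 : ‖u‖ ≤ 1) :
    ‖myTerm r c k u‖ ≤ 2 * |c (k + 1)| := by
  have huabs : (0:ℝ) < ‖u‖ := lt_of_lt_of_le hr0 h1
  have hz : u ^ (-(k + 1 : ℤ)) = (u ^ (k + 1))⁻¹ := by
    rw [zpow_neg]
    norm_cast
  have h3 : ‖u ^ (k + 1)‖ ≤ 1 := by
    rw [norm_pow]
    exact pow_le_one₀ (norm_nonneg u) h2
  have h4 : ‖(r : ℂ) ^ (2 * (k + 1)) * u ^ (-(k + 1 : ℤ))‖ ≤ 1 := by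
    rw [hz, norm_mul, norm_inv, norm_pow, norm_pow, Complex.norm_real,
      Real.norm_eq_abs, abs_of_pos hr0]
    have hp : r ^ (k + 1) ≤ ‖u‖ ^ (k + 1) := pow_le_pow_left₀ hr0.le h1 _
    have hq : (‖u‖ ^ (k + 1))⁻¹ ≤ (r ^ (k + 1))⁻¹ := by
      apply inv_anti₀ (by positivity) hp
    calc r ^ (2 * (k + 1)) * (‖u‖ ^ (k + 1))⁻¹
        ≤ r ^ (2 * (k + 1)) * (r ^ (k + 1))⁻¹ := by
          apply mul_le_mul_of_nonneg_left hq (by positivity)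
      _ = r ^ (k + 1) := by
          rw [two_mul, pow_add]
          field_simp
      _ ≤ 1 := pow_le_one₀ hr0.le hr1.le
  calc ‖myTerm r c k u‖
      = |c (k + 1)| * ‖u ^ (k + 1) + (r : ℂ) ^ (2 * (k + 1)) * u ^ (-(k + 1 : ℤ))‖ := by
        rw [myTerm, norm_mul, Complex.norm_real, Real.norm_eq_abs]
    _ ≤ |c (k + 1)| * (1 + 1) := by
        apply mul_le_mul_of_nonneg_left _ (abs_nonneg _)
        exact le_trans (norm_add_le _ _) (add_le_add h3 h4)
    _ = 2 * |c (k + 1)| := by ring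

lemma myTerm_summable {r : ℝ} (hr0 : 0 < r) (hr1 : r < 1) {c : ℕ → ℝ}
    (hc : Summable (fun k : ℕ => |c (k + 1)|)) {u : ℂ}
    (h1 : r ≤ ‖u‖) (h2 : ‖u‖ ≤ 1) :
    Summable (fun k => myTerm r c k u) := by
  apply Summable.of_norm_bounded (hc.mul_left 2)
  exact fun k => myTerm_bound hr0 hr1 c k h1 h2

lemma myTerm_circle (r : ℝ) (c : ℕ → ℝ) (k : ℕ) (t : ℝ) :
    myTerm r c k (Complex.exp (t * Complex.I)) =
      Complex.ofReal (c (k + 1) * (1 + r ^ (2 * (k + 1))) * Real.cos ((k + 1) * t)) +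
      Complex.ofReal (c (k + 1) * (1 - r ^ (2 * (k + 1))) * Real.sin ((k + 1) * t)) *
        Complex.I := by
  have h1 : Complex.exp (t * Complex.I) ^ (k + 1) =
      Complex.exp ((((k + 1 : ℕ) * t : ℝ)) * Complex.I) := by
    rw [← Complex.exp_nat_mul]
    push_cast
    ring_nf
  have h2 : Complex.exp (t * Complex.I) ^ (-(k + 1 : ℤ)) =
      Complex.exp (((-((k + 1 : ℕ) * t) : ℝ)) * Complex.I) := by
    rw [← Complex.exp_int_mul]
    push_cast
    ring_nf
  rw [myTerm, h1, h2]
  rw [Complex.exp_mul_I, Complex.exp_mul_I]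
  push_cast
  rw [Complex.ext_iff]
  constructor <;> simp [Complex.mul_re, Complex.mul_im, Complex.add_re, Complex.add_im,
    Real.cos_neg, Real.sin_neg] <;> ring

lemma myTerm_im_zero {r : ℝ} (hr0 : 0 < r) (c : ℕ → ℝ) (k : ℕ) {u : ℂ}
    (hu : ‖u‖ = r) : (myTerm r c k u).im = 0 := by
  have hu0 : u ≠ 0 := by
    intro h
    rw [h] at hu
    simp at hu
    exact hr0.ne' hu.symm
  have hkey : (r : ℂ) ^ (2 * (k + 1)) * u ^ (-(k + 1 : ℤ)) = starRingEnd ℂ (u ^ (k + 1)) := by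
    have h1 : u * starRingEnd ℂ u = ((r : ℂ)) ^ 2 := by
      rw [Complex.mul_conj]
      rw [← Complex.sq_norm, hu]
      push_cast
      ring
    have h2 : (r : ℂ) ^ (2 * (k + 1)) = (u * starRingEnd ℂ u) ^ (k + 1) := by
      rw [h1, ← pow_mul]
    rw [h2, mul_pow, map_pow]
    have h3 : u ^ (-(k + 1 : ℤ)) = (u ^ (k + 1))⁻¹ := by
      rw [zpow_neg]; norm_cast
    rw [h3, mul_comm (u ^ (k+1)), mul_assoc, mul_inv_cancel₀ (pow_ne_zero _ hu0), mul_one]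
  rw [myTerm, hkey]
  simp only [Complex.mul_im, Complex.add_im, Complex.ofReal_re, Complex.ofReal_im,
    ← map_pow, Complex.conj_im]
  ring

lemma myTerm_eq (r : ℝ) (c : ℕ → ℝ) (k : ℕ) : myTerm r c k =
    fun u => (c (k + 1) : ℂ) * (u ^ (k + 1) + (r : ℂ) ^ (2 * (k + 1)) * (u ^ (k + 1))⁻¹) := by
  funext u
  rw [myTerm, zpow_neg]
  norm_cast

lemma myTerm_continuousOn {r : ℝ} (hr0 : 0 < r) (c : ℕ → ℝ) (k : ℕ) :
    ContinuousOn (myTerm r c k) {u : ℂ | r ≤ ‖u‖ ∧ ‖u‖ ≤ 1} := by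
  rw [myTerm_eq]
  apply ContinuousOn.mul continuousOn_const
  apply ContinuousOn.add (continuousOn_pow _)
  apply ContinuousOn.mul continuousOn_const
  apply ContinuousOn.inv₀ (continuousOn_pow _)
  intro u hu
  apply pow_ne_zero
  intro h
  rw [h] at hu
  simp at hu
  linarith

lemma myTerm_differentiableOn {r : ℝ} (hr0 : 0 < r) (c : ℕ → ℝ) (k : ℕ) :
    DifferentiableOn ℂ (myTerm r c k) {u : ℂ | r < ‖u‖ ∧ ‖u‖ < 1} := by
  rw [myTerm_eq]
  apply DifferentiableOn.mul (differentiableOn_const _)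
  apply DifferentiableOn.add (DifferentiableOn.pow differentiableOn_id _)
  apply DifferentiableOn.mul (differentiableOn_const _)
  apply DifferentiableOn.inv (DifferentiableOn.pow differentiableOn_id _)
  intro u hu
  apply pow_ne_zero
  intro h
  simp only [id_eq] at h
  rw [h] at hu
  simp only [Set.mem_setOf_eq, map_zero, norm_zero] at hu
  linarith [hu.1]

lemma myAnnulus_open (r : ℝ) : IsOpen {u : ℂ | r < ‖u‖ ∧ ‖u‖ < 1} := by
  have : {u : ℂ | r < ‖u‖ ∧ ‖u‖ < 1} =
      {u : ℂ | r < ‖u‖} ∩ {u : ℂ | ‖u‖ < 1} := rfl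
  rw [this]
  exact (isOpen_lt continuous_const continuous_norm).inter
    (isOpen_lt continuous_norm continuous_const)

/-! ### Uniqueness from vanishing Fourier coefficients -/

lemma muPi_eq_Ioc : muPi = volume.restrict (Set.Ioc (-Real.pi) Real.pi) :=
  Measure.restrict_congr_set Ioo_ae_eq_Ioc

instance muPi_finite : IsFiniteMeasure muPi :=
  ⟨by rw [muPi, Measure.restrict_apply_univ, Real.volume_Ioo]; exact ENNReal.ofReal_lt_top⟩

lemma vanishing_coeffs {φ : ℝ → ℝ} (hmeas : Measurable φ) (hmem : MemLp φ 2 muPi)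
    (hcos : ∀ m : ℕ, cosCoef φ m = 0) (hsin : ∀ m : ℕ, sinCoef φ m = 0) :
    ∀ᵐ t ∂muPi, φ t = 0 := by
  have hπ : (0:ℝ) < Real.pi := Real.pi_pos
  haveI hfact : Fact (0 < 2 * Real.pi) := ⟨by linarith⟩
  have hend : -Real.pi + 2 * Real.pi = Real.pi := by ring
  have hle : -Real.pi ≤ Real.pi := by linarith
  -- interval integrability of φ
  have hint : IntervalIntegrable φ volume (-Real.pi) Real.pi := by
    rw [intervalIntegrable_iff_integrableOn_Ioc_of_le hle]
    have := hmem.integrable one_le_two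
    rw [muPi_eq_Ioc] at this
    exact this
  -- integer-indexed vanishing
  have hIcos : ∀ m : ℤ, (∫ x in (-Real.pi)..Real.pi, φ x * Real.cos (m * x)) = 0 := by
    intro m
    obtain ⟨n, hn | hn⟩ := Int.eq_nat_or_neg m
    · subst hn
      have h2 : (∫ x in (-Real.pi)..Real.pi, φ x * Real.cos (((n:ℤ) : ℝ) * x)) =
          ∫ x in (-Real.pi)..Real.pi, φ x * Real.cos ((n:ℝ) * x) := by
        apply intervalIntegral.integral_congr
        intro x _
        norm_num
      rw [h2]
      simpa [cosCoef] using hcos n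
    · subst hn
      have h2 : (∫ x in (-Real.pi)..Real.pi, φ x * Real.cos (((-(n:ℤ) : ℤ) : ℝ) * x)) =
          ∫ x in (-Real.pi)..Real.pi, φ x * Real.cos ((n:ℝ) * x) := by
        apply intervalIntegral.integral_congr
        intro x _
        push_cast
        rw [neg_mul, Real.cos_neg]
      rw [h2]
      simpa [cosCoef] using hcos n
  have hIsin : ∀ m : ℤ, (∫ x in (-Real.pi)..Real.pi, φ x * Real.sin (m * x)) = 0 := by
    intro m
    obtain ⟨n, hn | hn⟩ := Int.eq_nat_or_neg m
    · subst hn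
      have h2 : (∫ x in (-Real.pi)..Real.pi, φ x * Real.sin (((n:ℤ) : ℝ) * x)) =
          ∫ x in (-Real.pi)..Real.pi, φ x * Real.sin ((n:ℝ) * x) := by
        apply intervalIntegral.integral_congr
        intro x _
        norm_num
      rw [h2]
      simpa [sinCoef] using hsin n
    · subst hn
      have h2 : (∫ x in (-Real.pi)..Real.pi, φ x * Real.sin (((-(n:ℤ) : ℤ) : ℝ) * x)) =
          -∫ x in (-Real.pi)..Real.pi, φ x * Real.sin ((n:ℝ) * x) := by
        rw [← intervalIntegral.integral_neg]
        apply intervalIntegral.integral_congr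
        intro x _
        push_cast
        rw [neg_mul, Real.sin_neg]
        ring
      rw [h2]
      simp only [neg_eq_zero]
      simpa [sinCoef] using hsin n
  -- lift to the additive circle
  set ψ : AddCircle (2 * Real.pi) → ℂ :=
    AddCircle.liftIoc (2 * Real.pi) (-Real.pi) (fun t => (φ t : ℂ)) with hψdef
  have hψcoe : ∀ x ∈ Set.Ioc (-Real.pi) Real.pi, ψ (x : AddCircle (2 * Real.pi)) = (φ x : ℂ) := by
    intro x hx
    apply AddCircle.liftIoc_coe_apply
    rwa [hend]
  have hψmeas : Measurable ψ := by
    have : ψ = (fun x : Set.Ioc (-Real.pi) (-Real.pi + 2 * Real.pi) => (φ (x : ℝ) : ℂ)) ∘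
        (AddCircle.measurableEquivIoc (2 * Real.pi) (-Real.pi)) := rfl
    rw [this]
    exact (Complex.measurable_ofReal.comp (hmeas.comp measurable_subtype_coe)).comp
      (AddCircle.measurableEquivIoc (2 * Real.pi) (-Real.pi)).measurable
  -- all Fourier coefficients of ψ vanish
  have hfc : ∀ n : ℤ, fourierCoeff ψ n = 0 := by
    intro n
    rw [fourierCoeff_eq_intervalIntegral ψ n (-Real.pi)]
    have hcongr : (∫ x in (-Real.pi)..(-Real.pi + 2 * Real.pi),
        fourier (-n) (x : AddCircle (2 * Real.pi)) • ψ (x : AddCircle (2 * Real.pi))) =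
        ∫ x in (-Real.pi)..(-Real.pi + 2 * Real.pi),
          fourier (-n) (x : AddCircle (2 * Real.pi)) • (φ x : ℂ) := by
      apply intervalIntegral.integral_congr_ae
      apply ae_of_all
      intro x hx
      rw [Set.uIoc_of_le (by linarith)] at hx
      rw [hψcoe x (by rwa [hend] at hx)]
    rw [hcongr]
    have hfour : ∀ x : ℝ, fourier (-n) (x : AddCircle (2 * Real.pi)) • (φ x : ℂ) =
        Complex.ofReal (φ x * Real.cos ((-n : ℤ) * x)) +
          Complex.ofReal (φ x * Real.sin ((-n : ℤ) * x)) * Complex.I := by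
      intro x
      rw [fourier_coe_apply]
      have harg : 2 * ↑Real.pi * Complex.I * ↑(-n : ℤ) * ↑x / ↑(2 * Real.pi) =
          ((((-n : ℤ) : ℝ) * x : ℝ) : ℂ) * Complex.I := by
        have hπ' : (Real.pi : ℂ) ≠ 0 := Complex.ofReal_ne_zero.mpr hπ.ne'
        push_cast
        field_simp
      rw [harg, Complex.exp_mul_I, smul_eq_mul, ← Complex.ofReal_cos, ← Complex.ofReal_sin]
      push_cast
      ring
    simp_rw [hfour]
    have hi1 : IntervalIntegrable (fun x => φ x * Real.cos ((-n : ℤ) * x)) volume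
        (-Real.pi) (-Real.pi + 2 * Real.pi) := by
      rw [hend]
      exact hint.mul_continuousOn (Continuous.continuousOn (by fun_prop))
    have hi2 : IntervalIntegrable (fun x => φ x * Real.sin ((-n : ℤ) * x)) volume
        (-Real.pi) (-Real.pi + 2 * Real.pi) := by
      rw [hend]
      exact hint.mul_continuousOn (Continuous.continuousOn (by fun_prop))
    have hi1c : IntervalIntegrable (fun x => ((φ x * Real.cos ((-n : ℤ) * x) : ℝ) : ℂ)) volume
        (-Real.pi) (-Real.pi + 2 * Real.pi) := by
      rw [intervalIntegrable_iff] at hi1 ⊢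
      exact hi1.ofReal
    have hi2c : IntervalIntegrable (fun x => ((φ x * Real.sin ((-n : ℤ) * x) : ℝ) : ℂ)) volume
        (-Real.pi) (-Real.pi + 2 * Real.pi) := by
      rw [intervalIntegrable_iff] at hi2 ⊢
      exact hi2.ofReal
    rw [intervalIntegral.integral_add hi1c (hi2c.mul_const _)]
    rw [intervalIntegral.integral_mul_const, intervalIntegral.integral_ofReal,
      intervalIntegral.integral_ofReal]
    rw [hend, hIcos (-n), hIsin (-n)]
    simp
  -- ψ is in L²
  have hmp := AddCircle.measurePreserving_mk (2 * Real.pi) (-Real.pi)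
  have hmem2 : MemLp (fun x => (φ x : ℂ)) 2 (volume.restrict
      (Set.Ioc (-Real.pi) (-Real.pi + 2 * Real.pi))) := by
    rw [hend, ← muPi_eq_Ioc]
    exact hmem.ofReal
  have hψvol : MemLp ψ 2 (volume : Measure (AddCircle (2 * Real.pi))) := by
    rw [← hmp.map_eq]
    rw [memLp_map_measure_iff hψmeas.stronglyMeasurable.aestronglyMeasurable
      AddCircle.measurable_mk'.aemeasurable]
    apply hmem2.ae_eq
    filter_upwards [ae_restrict_mem measurableSet_Ioc] with x hx
    rw [Function.comp_apply, hψcoe x (by rwa [hend] at hx)]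
  have hhaarle : (AddCircle.haarAddCircle : Measure (AddCircle (2 * Real.pi))) ≤ volume := by
    rw [AddCircle.volume_eq_smul_haarAddCircle]
    refine Measure.le_intro fun s _ _ => ?_
    rw [Measure.smul_apply, smul_eq_mul]
    exact le_mul_of_one_le_left zero_le
      (ENNReal.one_le_ofReal.mpr (by linarith [Real.pi_gt_three]))
  have hψhaar : MemLp ψ 2 (AddCircle.haarAddCircle : Measure (AddCircle (2 * Real.pi))) :=
    hψvol.mono_measure hhaarle
  -- conclude ψ = 0 a.e. via the Fourier basis
  set f2 : Lp ℂ 2 (AddCircle.haarAddCircle : Measure (AddCircle (2 * Real.pi))) :=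
    hψhaar.toLp ψ with hf2def
  have hrepr : fourierBasis.repr f2 = 0 := by
    ext n
    rw [fourierBasis_repr]
    have : fourierCoeff (f2 : AddCircle (2 * Real.pi) → ℂ) n = fourierCoeff ψ n := by
      apply integral_congr_ae
      filter_upwards [hψhaar.coeFn_toLp] with x hx
      rw [hx]
    rw [this, hfc n]
    rfl
  have hf2zero : f2 = 0 := by
    apply fourierBasis.repr.injective
    rw [hrepr]
    exact (map_zero _).symm
  have hψzero_haar : ∀ᵐ x ∂(AddCircle.haarAddCircle : Measure (AddCircle (2 * Real.pi))),
      ψ x = 0 := by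
    have h1 : (f2 : AddCircle (2 * Real.pi) → ℂ) =ᵐ[AddCircle.haarAddCircle] ψ :=
      hψhaar.coeFn_toLp
    have h2 : (f2 : AddCircle (2 * Real.pi) → ℂ) =ᵐ[AddCircle.haarAddCircle] 0 := by
      rw [hf2zero]
      exact Lp.coeFn_zero _ _ _
    filter_upwards [h1, h2] with x hx1 hx2
    rw [← hx1, hx2]
    rfl
  have hψzero_vol : ∀ᵐ x ∂(volume : Measure (AddCircle (2 * Real.pi))), ψ x = 0 := by
    rw [AddCircle.volume_eq_smul_haarAddCircle]
    exact Measure.ae_smul_measure hψzero_haar _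
  -- pull back to the interval
  have hpull : ∀ᵐ (x : ℝ) ∂(volume.restrict (Set.Ioc (-Real.pi) (-Real.pi + 2 * Real.pi))),
      ψ ((x : ℝ) : AddCircle (2 * Real.pi)) = 0 := by
    rw [← hmp.map_eq] at hψzero_vol
    exact ae_of_ae_map AddCircle.measurable_mk'.aemeasurable hψzero_vol
  rw [hend] at hpull
  rw [muPi_eq_Ioc]
  filter_upwards [hpull, ae_restrict_mem measurableSet_Ioc] with x hx hxmem
  have := hψcoe x hxmem
  rw [this] at hx
  exact_mod_cast hx

lemma my_coef_congr {f₁ f₂ : ℝ → ℝ} (h : f₁ =ᵐ[muPi] f₂) (v : ℝ → ℝ) :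
    ∫ t in (-Real.pi)..Real.pi, f₁ t * v t = ∫ t in (-Real.pi)..Real.pi, f₂ t * v t := by
  rw [intervalIntegral.integral_of_le neg_pi_lt_pi'.le,
    intervalIntegral.integral_of_le neg_pi_lt_pi'.le, ← muPi_eq_Ioc]
  exact integral_congr_ae (h.mono fun x hx => by simp only [hx])

lemma my_part6 (r : ℝ) (hr0 : 0 < r) (hr1 : r < 1) (c : ℕ → ℝ)
    (hc : Summable (fun k : ℕ => |c (k + 1)|)) (g fIm : ℝ → ℝ)
    (hfIm : ∀ t : ℝ, fIm t =
      ∑' k : ℕ, c (k + 1) * (1 - r ^ (2 * (k + 1))) * Real.sin (((k : ℝ) + 1) * t))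
    (hg : IsBr r fIm g) :
    ∀ᵐ t : ℝ ∂muPi,
      g t = -∑' k : ℕ, c (k + 1) * (1 + r ^ (2 * (k + 1))) * Real.cos (((k : ℝ) + 1) * t) := by
  obtain ⟨hgmem, hg0, hgc, hgs⟩ := hg
  have hπ := Real.pi_pos
  -- abbreviations
  set a : ℕ → ℝ := fun k => c (k + 1) * (1 - r ^ (2 * (k + 1))) with hadef
  set b : ℕ → ℝ := fun k => c (k + 1) * (1 + r ^ (2 * (k + 1))) with hbdef
  set w : ℕ → ℝ → ℝ := fun k t => Real.cos (((k : ℝ) + 1) * t) with hwdef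
  set ws : ℕ → ℝ → ℝ := fun k t => Real.sin (((k : ℝ) + 1) * t) with hwsdef
  have hrpow1 : ∀ k : ℕ, r ^ (2 * (k + 1)) < 1 := fun k => pow_lt_one₀ hr0.le hr1 (by omega)
  have hrpow0 : ∀ k : ℕ, (0:ℝ) < r ^ (2 * (k + 1)) := fun k => by positivity
  have hb_le : ∀ k, |b k| ≤ 2 * |c (k + 1)| := by
    intro k
    rw [hbdef]
    rw [abs_mul, abs_of_pos (show (0:ℝ) < 1 + r ^ (2*(k+1)) by linarith [hrpow0 k])]
    nlinarith [abs_nonneg (c (k+1)), hrpow1 k]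
  have ha_le : ∀ k, |a k| ≤ 2 * |c (k + 1)| := by
    intro k
    rw [hadef]
    rw [abs_mul, abs_of_pos (show (0:ℝ) < 1 - r ^ (2*(k+1)) by linarith [hrpow1 k])]
    nlinarith [abs_nonneg (c (k+1)), hrpow0 k]
  have hb_sum : Summable fun k => |b k| :=
    Summable.of_nonneg_of_le (fun k => abs_nonneg _) hb_le (hc.mul_left 2)
  have ha_sum : Summable fun k => |a k| :=
    Summable.of_nonneg_of_le (fun k => abs_nonneg _) ha_le (hc.mul_left 2)
  have hwc : ∀ k, Continuous (w k) := fun k => by fun_prop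
  have hwsc : ∀ k, Continuous (ws k) := fun k => by fun_prop
  have hwb : ∀ k t, |w k t| ≤ 1 := fun k t => Real.abs_cos_le_one _
  have hwsb : ∀ k t, |ws k t| ≤ 1 := fun k t => Real.abs_sin_le_one _
  -- the function h(t)
  set hfun : ℝ → ℝ := fun t => ∑' k : ℕ, b k * w k t with hhdef
  have hfIm' : ∀ t : ℝ, fIm t = ∑' k : ℕ, a k * ws k t := hfIm
  -- continuity
  have hcont_h : Continuous hfun := by
    rw [hhdef]
    apply continuous_tsum (fun k => by fun_prop) (hc.mul_left 2)
    intro k t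
    rw [Real.norm_eq_abs, abs_mul]
    calc |b k| * |w k t| ≤ |b k| * 1 := by gcongr; exact hwb k t
      _ ≤ 2 * |c (k + 1)| := by rw [mul_one]; exact hb_le k
  have hcont_fIm : Continuous fIm := by
    have : fIm = fun t => ∑' k : ℕ, a k * ws k t := funext hfIm'
    rw [this]
    apply continuous_tsum (fun k => by fun_prop) (hc.mul_left 2)
    intro k t
    rw [Real.norm_eq_abs, abs_mul]
    calc |a k| * |ws k t| ≤ |a k| * 1 := by gcongr; exact hwsb k t
      _ ≤ 2 * |c (k + 1)| := by rw [mul_one]; exact ha_le k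
  -- orthogonality integrals in convenient form
  have horth_ss : ∀ k m : ℕ,
      (∫ t in (-Real.pi)..Real.pi, ws k t * Real.sin (((m : ℝ) + 1) * t)) =
        if k = m then Real.pi else 0 := by
    intro k m
    have h := my_sin_mul_sin (k+1) (m+1) k.succ_ne_zero m.succ_ne_zero
    push_cast at h
    rw [hwsdef]
    simp only []
    rw [h]
  have horth_cc : ∀ k m : ℕ,
      (∫ t in (-Real.pi)..Real.pi, w k t * Real.cos (((m : ℝ) + 1) * t)) =
        if k = m then Real.pi else 0 := by
    intro k m
    have h := my_cos_mul_cos (k+1) (m+1) (Or.inl k.succ_ne_zero)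
    push_cast at h
    rw [hwdef]
    simp only []
    rw [h]
  have horth_c0 : ∀ k : ℕ,
      (∫ t in (-Real.pi)..Real.pi, w k t * Real.cos ((0 : ℝ) * t)) = 0 := by
    intro k
    have h := my_cos_mul_cos (k+1) 0 (Or.inl k.succ_ne_zero)
    push_cast at h
    rw [hwdef]
    simp only []
    rw [h]
  -- Fourier coefficients of fIm
  have hsin_fIm : ∀ m : ℕ, sinCoef fIm (m + 1) = a m * Real.pi := by
    intro m
    rw [sinCoef]
    have hcast : ((m + 1 : ℕ) : ℝ) = (m : ℝ) + 1 := by push_cast; ring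
    simp_rw [hfIm', hcast]
    rw [my_interchange a ha_sum ws hwsc hwsb _ (by fun_prop)
      (fun t => Real.abs_sin_le_one _)]
    rw [tsum_eq_single m]
    · rw [horth_ss m m, if_pos rfl]
    · intro k hk
      rw [horth_ss k m, if_neg hk, mul_zero]
  have hcos_fIm : ∀ m : ℕ, cosCoef fIm m = 0 := by
    intro m
    rw [cosCoef]
    apply my_odd_integral (by fun_prop)
    intro x
    have h1 : fIm (-x) = -fIm x := by
      rw [hfIm' x, hfIm' (-x)]
      rw [← tsum_neg]
      apply tsum_congr
      intro k
      rw [hwsdef]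
      simp only []
      rw [mul_neg, Real.sin_neg]
      ring
    rw [h1, mul_neg, Real.cos_neg]
    ring
  -- Fourier coefficients of hfun
  have hcos_h : ∀ m : ℕ, cosCoef hfun (m + 1) = b m * Real.pi := by
    intro m
    rw [cosCoef]
    have hcast : ((m + 1 : ℕ) : ℝ) = (m : ℝ) + 1 := by push_cast; ring
    simp_rw [hhdef, hcast]
    rw [my_interchange b hb_sum w hwc hwb _ (by fun_prop)
      (fun t => Real.abs_cos_le_one _)]
    rw [tsum_eq_single m]
    · rw [horth_cc m m, if_pos rfl]
    · intro k hk
      rw [horth_cc k m, if_neg hk, mul_zero]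
  have hcos_h0 : cosCoef hfun 0 = 0 := by
    rw [cosCoef]
    have hcast : ((0 : ℕ) : ℝ) = (0 : ℝ) := by norm_num
    simp_rw [hhdef, hcast]
    rw [my_interchange b hb_sum w hwc hwb _ (by fun_prop)
      (fun t => Real.abs_cos_le_one _)]
    rw [tsum_congr (fun k => by rw [horth_c0 k, mul_zero]), tsum_zero]
  have hsin_h : ∀ m : ℕ, sinCoef hfun m = 0 := by
    intro m
    rw [sinCoef]
    apply my_odd_integral (by fun_prop)
    intro x
    have h1 : hfun (-x) = hfun x := by
      rw [hhdef]
      simp only []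
      apply tsum_congr
      intro k
      rw [hwdef]
      simp only []
      rw [mul_neg, Real.cos_neg]
    rw [h1, mul_neg, Real.sin_neg]
    ring
  -- measurable representative of g
  set g' : ℝ → ℝ := hgmem.aestronglyMeasurable.mk g with hg'def
  have hgg' : g =ᵐ[muPi] g' := hgmem.aestronglyMeasurable.ae_eq_mk
  have hg'meas : Measurable g' := hgmem.aestronglyMeasurable.stronglyMeasurable_mk.measurable
  have hg'mem : MemLp g' 2 muPi := hgmem.ae_eq hgg'
  have hg'coef : ∀ v : ℝ → ℝ,
      (∫ t in (-Real.pi)..Real.pi, g' t * v t) = ∫ t in (-Real.pi)..Real.pi, g t * v t :=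
    fun v => my_coef_congr hgg'.symm v
  -- membership of hfun in L²
  have hmem_h : MemLp hfun 2 muPi := by
    apply MemLp.of_bound hcont_h.measurable.aestronglyMeasurable (∑' k, 2 * |c (k + 1)|)
    apply ae_of_all
    intro t
    rw [Real.norm_eq_abs]
    have hsumn : Summable fun k => ‖b k * w k t‖ := by
      apply Summable.of_nonneg_of_le (fun k => norm_nonneg _) (fun k => ?_) (hc.mul_left 2)
      rw [Real.norm_eq_abs, abs_mul]
      calc |b k| * |w k t| ≤ |b k| * 1 := by gcongr; exact hwb k t
        _ ≤ 2 * |c (k + 1)| := by rw [mul_one]; exact hb_le k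
    calc |hfun t| ≤ ∑' k, ‖b k * w k t‖ := by
          rw [hhdef]
          exact norm_tsum_le_tsum_norm hsumn
      _ ≤ ∑' k, 2 * |c (k + 1)| := by
          apply Summable.tsum_le_tsum _ hsumn (hc.mul_left 2)
          intro k
          rw [Real.norm_eq_abs, abs_mul]
          calc |b k| * |w k t| ≤ |b k| * 1 := by gcongr; exact hwb k t
            _ ≤ 2 * |c (k + 1)| := by rw [mul_one]; exact hb_le k
  -- interval integrability
  have hint_g' : IntervalIntegrable g' volume (-Real.pi) Real.pi := by
    rw [intervalIntegrable_iff_integrableOn_Ioc_of_le neg_pi_lt_pi'.le]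
    have := hg'mem.integrable one_le_two
    rw [muPi_eq_Ioc] at this
    exact this
  -- additivity of coefficients
  have hadd : ∀ v : ℝ → ℝ, Continuous v →
      (∫ t in (-Real.pi)..Real.pi, (g' t + hfun t) * v t) =
        (∫ t in (-Real.pi)..Real.pi, g' t * v t) +
          ∫ t in (-Real.pi)..Real.pi, hfun t * v t := by
    intro v hv
    have h1 := hint_g'.mul_continuousOn hv.continuousOn
    have h2 : IntervalIntegrable (fun t => hfun t * v t) volume (-Real.pi) Real.pi :=
      (hcont_h.mul hv).intervalIntegrable (μ := volume) (-Real.pi) Real.pi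
    rw [← intervalIntegral.integral_add h1 h2]
    apply intervalIntegral.integral_congr
    intro t _
    ring
  -- the combined function
  set φ : ℝ → ℝ := fun t => g' t + hfun t with hφdef
  have hφmeas : Measurable φ := hg'meas.add hcont_h.measurable
  have hφmem : MemLp φ 2 muPi := hg'mem.add hmem_h
  have hne : ∀ m : ℕ, (1 : ℝ) - r ^ (2 * (m + 1)) ≠ 0 := fun m => by
    have := hrpow1 m; linarith
  have hcosφ : ∀ m : ℕ, cosCoef φ m = 0 := by
    intro m
    rw [cosCoef]
    simp_rw [hφdef]
    rw [hadd _ (by fun_prop)]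
    cases m with
    | zero =>
      rw [hg'coef]
      have h0 : (∫ t in (-Real.pi)..Real.pi, g t * Real.cos (((0:ℕ) : ℝ) * t)) = 0 := hg0
      rw [h0]
      have := hcos_h0
      rw [cosCoef] at this
      rw [this, add_zero]
    | succ m =>
      rw [hg'coef]
      have h1 : (∫ t in (-Real.pi)..Real.pi, g t * Real.cos (((m + 1 : ℕ) : ℝ) * t)) =
          -(brMult r (m + 1)) * sinCoef fIm (m + 1) := hgc (m + 1) (by omega)
      rw [h1, hsin_fIm m]
      have h2 : (∫ t in (-Real.pi)..Real.pi, hfun t * Real.cos (((m + 1 : ℕ) : ℝ) * t)) =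
          b m * Real.pi := by
        have := hcos_h m
        rw [cosCoef] at this
        exact this
      rw [h2]
      have hkey : brMult r (m + 1) * a m = b m := by
        rw [brMult, hadef, hbdef]
        simp only []
        field_simp [hne m]
      rw [show -brMult r (m + 1) * (a m * Real.pi) = -(brMult r (m + 1) * a m) * Real.pi
        from by ring, hkey]
      ring
  have hsinφ : ∀ m : ℕ, sinCoef φ m = 0 := by
    intro m
    cases m with
    | zero =>
      rw [sinCoef]
      simp
    | succ m =>
      rw [sinCoef]
      simp_rw [hφdef]
      rw [hadd _ (by fun_prop)]
      rw [hg'coef]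
      have h1 : (∫ t in (-Real.pi)..Real.pi, g t * Real.sin (((m + 1 : ℕ) : ℝ) * t)) =
          brMult r (m + 1) * cosCoef fIm (m + 1) := hgs (m + 1) (by omega)
      rw [h1, hcos_fIm (m + 1), mul_zero, zero_add]
      have := hsin_h (m + 1)
      rw [sinCoef] at this
      exact this
  have hzero := vanishing_coeffs hφmeas hφmem hcosφ hsinφ
  filter_upwards [hzero, hgg'] with t h1 h2
  rw [hφdef] at h1
  simp only [] at h1
  have : g' t = -hfun t := by linarith
  rw [h2, this, hhdef]


/-- **Conjugation property of `𝔅_r`.** Let `r ∈ (0,1)` and let `(c_k)_{k≥1}` be absolutely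
summable reals. The function `F(u) = Σ_{k≥1} c_k (u^k + r^(2k) u^(−k))` is continuous on the
closed annulus `{r ≤ |u| ≤ 1}`, holomorphic in its interior, has identically vanishing
imaginary part on the inner circle `{|u| = r}`, and satisfies, with
`Re F(e^{it}) = Σ c_k (1+r^(2k)) cos(kt)` and `Im F(e^{it}) = Σ c_k (1−r^(2k)) sin(kt)`,
the conjugation identity `Re F(e^{it}) + 𝔅_r(Im F(e^{i·}))(t) = 0` on `(−π,π)`, the operator
`𝔅_r` applied to `Im F(e^{i·})` being `−Σ c_k (1+r^(2k)) cos(kt)`. -/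
theorem Br_conjugation (r : ℝ) (hr : r ∈ Set.Ioo (0 : ℝ) 1) (c : ℕ → ℝ)
    (hc : Summable (fun k : ℕ => |c (k + 1)|))
    (F : ℂ → ℂ)
    (hF : ∀ u : ℂ, F u = ∑' k : ℕ,
      (c (k + 1) : ℂ) * (u ^ (k + 1) + (r : ℂ) ^ (2 * (k + 1)) * u ^ (-(k + 1 : ℤ)))) :
    ContinuousOn F {u : ℂ | r ≤ ‖u‖ ∧ ‖u‖ ≤ 1} ∧
    DifferentiableOn ℂ F {u : ℂ | r < ‖u‖ ∧ ‖u‖ < 1} ∧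
    (∀ u : ℂ, ‖u‖ = r → (F u).im = 0) ∧
    (∀ t : ℝ, (F (Complex.exp (t * Complex.I))).re =
      ∑' k : ℕ, c (k + 1) * (1 + r ^ (2 * (k + 1))) * Real.cos ((k + 1) * t)) ∧
    (∀ t : ℝ, (F (Complex.exp (t * Complex.I))).im =
      ∑' k : ℕ, c (k + 1) * (1 - r ^ (2 * (k + 1))) * Real.sin ((k + 1) * t)) ∧
    (∀ g : ℝ → ℝ, IsBr r (fun t => (F (Complex.exp (t * Complex.I))).im) g →
      (∀ᵐ t : ℝ ∂muPi,
        g t = -∑' k : ℕ, c (k + 1) * (1 + r ^ (2 * (k + 1))) * Real.cos ((k + 1) * t)) ∧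
      (∀ᵐ t : ℝ ∂muPi, (F (Complex.exp (t * Complex.I))).re + g t = 0)) := by
  obtain ⟨hr0, hr1⟩ := hr
  have hFeq : ∀ u : ℂ, F u = ∑' k, myTerm r c k u := hF
  -- Part 4 and 5, proven first
  have habs : ∀ t : ℝ, ‖Complex.exp (t * Complex.I)‖ = 1 := fun t =>
    Complex.norm_exp_ofReal_mul_I t
  have hsumc : ∀ t : ℝ, Summable (fun k => myTerm r c k (Complex.exp (t * Complex.I))) :=
    fun t => myTerm_summable hr0 hr1 hc (by rw [habs t]; exact hr1.le) (le_of_eq (habs t))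
  have hre : ∀ t : ℝ, (F (Complex.exp (t * Complex.I))).re =
      ∑' k : ℕ, c (k + 1) * (1 + r ^ (2 * (k + 1))) * Real.cos ((k + 1) * t) := by
    intro t
    rw [hFeq]
    rw [show (∑' k, myTerm r c k (Complex.exp (t * Complex.I))).re =
      Complex.reCLM (∑' k, myTerm r c k (Complex.exp (t * Complex.I))) from rfl]
    rw [Complex.reCLM.map_tsum (hsumc t)]
    apply tsum_congr
    intro k
    rw [show (Complex.reCLM : ℂ → ℝ) = Complex.re from rfl]
    rw [myTerm_circle]
    simp only [Complex.add_re, Complex.mul_re, Complex.ofReal_re, Complex.ofReal_im,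
      Complex.I_re, Complex.I_im]
    ring
  have him : ∀ t : ℝ, (F (Complex.exp (t * Complex.I))).im =
      ∑' k : ℕ, c (k + 1) * (1 - r ^ (2 * (k + 1))) * Real.sin ((k + 1) * t) := by
    intro t
    rw [hFeq]
    rw [show (∑' k, myTerm r c k (Complex.exp (t * Complex.I))).im =
      Complex.imCLM (∑' k, myTerm r c k (Complex.exp (t * Complex.I))) from rfl]
    rw [Complex.imCLM.map_tsum (hsumc t)]
    apply tsum_congr
    intro k
    rw [show (Complex.imCLM : ℂ → ℝ) = Complex.im from rfl]
    rw [myTerm_circle]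
    simp only [Complex.add_im, Complex.mul_im, Complex.ofReal_re, Complex.ofReal_im,
      Complex.I_re, Complex.I_im]
    ring
  refine ⟨?_, ?_, ?_, hre, him, ?_⟩
  · -- continuity on the closed annulus
    have h := continuousOn_tsum (fun k => myTerm_continuousOn hr0 c k) (hc.mul_left 2)
      (fun k u hu => myTerm_bound hr0 hr1 c k hu.1 hu.2)
    exact h.congr (fun u _ => hFeq u)
  · -- differentiability on the open annulus
    have hTU := tendstoUniformlyOn_tsum (hc.mul_left 2)
      (fun k (u : ℂ) (hu : u ∈ {u : ℂ | r < ‖u‖ ∧ ‖u‖ < 1}) =>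
        myTerm_bound hr0 hr1 c k hu.1.le hu.2.le)
    have hdiff := hTU.tendstoLocallyUniformlyOn.differentiableOn
      (Eventually.of_forall fun N => DifferentiableOn.fun_sum
        fun k _ => myTerm_differentiableOn hr0 c k)
      (myAnnulus_open r)
    exact hdiff.congr (fun u _ => hFeq u)
  · -- imaginary part vanishes on the inner circle
    intro u hu
    rw [hFeq]
    have hs : Summable (fun k => myTerm r c k u) :=
      myTerm_summable hr0 hr1 hc (le_of_eq hu.symm) (by rw [hu]; exact hr1.le)
    rw [show (∑' k, myTerm r c k u).im = Complex.imCLM (∑' k, myTerm r c k u) from rfl]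
    rw [Complex.imCLM.map_tsum hs]
    have : ∀ k : ℕ, (Complex.imCLM : ℂ → ℝ) (myTerm r c k u) = 0 := fun k =>
      myTerm_im_zero hr0 c k hu
    rw [tsum_congr this, tsum_zero]
  · -- the conjugation identity
    intro g hg
    have h1 := my_part6 r hr0 hr1 c hc g _ him hg
    refine ⟨h1, ?_⟩
    filter_upwards [h1] with t ht
    rw [hre t, ht]
    ring
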